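/- Let E be a real Hilbert space and let h : E → ℝ be differentiable, convex, and η-approximately β-gradient Lipschitz, i.e. ‖∇h(θ1) − ∇h(θ2)‖ ≤ β‖θ1 − θ2‖ + η for all θ1, θ2, with β > 0, η > 0. Then for all θ1, θ2, ⟪∇h(θ1) − ∇h(θ2), θ1 − θ2⟫ ≥ (1/β)·(max(‖∇h(θ1) − ∇h(θ2)‖ − η, 0))². -/

import Mathlib

open RealInnerProductSpace

section aux
variable {E : Type*} [NormedAddCommGroup E] [InnerProductSpace ℝ E] [CompleteSpace E]
  {h : E → ℝ} {g : E → E}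

lemma line_hasDerivAt (hgrad : ∀ θ : E, HasGradientAt h (g θ) θ) (x v : E) (t : ℝ) :
    HasDerivAt (fun s : ℝ => h (x + s • v)) ⟪g (x + t • v), v⟫ t := by
  have hline : HasDerivAt (fun s : ℝ => x + s • v) v t := by
    simpa using ((hasDerivAt_id t).smul_const v).const_add x
  have := ((hgrad (x + t • v)).hasFDerivAt).comp_hasDerivAt t hline
  simpa [InnerProductSpace.toDual_apply_apply, Function.comp_def] using this

lemma subgrad (hconv : ConvexOn ℝ Set.univ h)
    (hgrad : ∀ θ : E, HasGradientAt h (g θ) θ) (x y : E) :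
    h x + ⟪g x, y - x⟫ ≤ h y := by
  set v := y - x with hv
  have hψ : ConvexOn ℝ Set.univ (fun s : ℝ => h (x + s • v)) := by
    have := hconv.comp_affineMap (AffineMap.lineMap x y)
    have heq : ∀ s : ℝ, (h ∘ (AffineMap.lineMap x y)) s = h (x + s • v) := by
      intro s; simp [AffineMap.lineMap_apply, hv, add_comm]
    exact (this.subset (by simp) convex_univ).congr (fun s _ => heq s)
  have hd : HasDerivAt (fun s : ℝ => h (x + s • v)) ⟪g (x + (0:ℝ) • v), v⟫ 0 :=
    line_hasDerivAt hgrad x v 0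
  have hslope := hψ.le_slope_of_hasDerivAt (Set.mem_univ 0) (Set.mem_univ 1)
    one_pos (by simpa using hd)
  rw [slope_def_field] at hslope
  simp only [zero_smul, add_zero, one_smul] at hslope hd ⊢
  have hxv : x + v = y := by rw [hv]; abel
  rw [hxv] at hslope
  linarith [hslope]

lemma descent {β η : ℝ} (hβ : 0 < β)
    (hgrad : ∀ θ : E, HasGradientAt h (g θ) θ)
    (happrox : ∀ θ1 θ2 : E, ‖g θ1 - g θ2‖ ≤ β * ‖θ1 - θ2‖ + η) (x y : E) :
    h y ≤ h x + ⟪g x, y - x⟫ + β / 2 * ‖y - x‖ ^ 2 + η * ‖y - x‖ := by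
  set v := y - x with hv
  set F : ℝ → ℝ := fun t => h (x + t • v) - t * ⟪g x, v⟫ - β / 2 * t ^ 2 * ‖v‖ ^ 2
      - η * t * ‖v‖ with hF
  have hFd : ∀ t : ℝ, HasDerivAt F
      (⟪g (x + t • v), v⟫ - ⟪g x, v⟫ - β * t * ‖v‖ ^ 2 - η * ‖v‖) t := by
    intro t
    have h1 := line_hasDerivAt hgrad x v t
    have h2 : HasDerivAt (fun s : ℝ => s * ⟪g x, v⟫) ⟪g x, v⟫ t := by
      simpa using (hasDerivAt_id t).mul_const ⟪g x, v⟫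
    have h3 : HasDerivAt (fun s : ℝ => β / 2 * s ^ 2 * ‖v‖ ^ 2)
        (β * t * ‖v‖ ^ 2) t := by
      have : HasDerivAt (fun s : ℝ => s ^ 2) (2 * t) t := by
        simpa using hasDerivAt_pow 2 t
      have := ((this.const_mul (β / 2)).mul_const (‖v‖ ^ 2))
      rw [show β * t * ‖v‖ ^ 2 = β / 2 * (2 * t) * ‖v‖ ^ 2 by ring]; exact this
    have h4 : HasDerivAt (fun s : ℝ => η * s * ‖v‖) (η * ‖v‖) t := by
      have : HasDerivAt (fun s : ℝ => η * s) η t := by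
        simpa using (hasDerivAt_id t).const_mul η
      simpa using this.mul_const ‖v‖
    exact ((h1.sub h2).sub h3).sub h4
  have hanti : AntitoneOn F (Set.Icc 0 1) := by
    apply antitoneOn_of_deriv_nonpos (convex_Icc 0 1)
    · exact fun t _ => ((hFd t).differentiableAt.continuousAt).continuousWithinAt
    · exact fun t _ => ((hFd t).differentiableAt).differentiableWithinAt
    · intro t ht
      rw [interior_Icc] at ht
      rw [(hFd t).deriv]
      have hcs : ⟪g (x + t • v) - g x, v⟫ ≤ ‖g (x + t • v) - g x‖ * ‖v‖ :=
        real_inner_le_norm _ _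
      have hap : ‖g (x + t • v) - g x‖ ≤ β * (t * ‖v‖) + η := by
        have := happrox (x + t • v) x
        simpa [norm_smul, abs_of_pos ht.1] using this
      have hv0 : (0:ℝ) ≤ ‖v‖ := norm_nonneg _
      have := mul_le_mul_of_nonneg_right hap hv0
      rw [inner_sub_left] at hcs
      nlinarith [hcs]
  have h01 := hanti (Set.mem_Icc.mpr ⟨le_refl 0, zero_le_one⟩)
    (Set.mem_Icc.mpr ⟨zero_le_one, le_refl 1⟩) zero_le_one
  simp only [hF, zero_smul, add_zero, one_smul, zero_pow, mul_zero, zero_mul,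
    one_pow, mul_one, sub_zero, one_mul] at h01
  norm_num at h01
  have hxy : x + v = y := by rw [hv]; abel
  rw [hxy] at h01
  linarith

lemma key_step {β η : ℝ} (hβ : 0 < β) (hη : 0 < η)
    (hconv : ConvexOn ℝ Set.univ h)
    (hgrad : ∀ θ : E, HasGradientAt h (g θ) θ)
    (happrox : ∀ θ1 θ2 : E, ‖g θ1 - g θ2‖ ≤ β * ‖θ1 - θ2‖ + η)
    (θ1 θ2 : E) (hG : η < ‖g θ1 - g θ2‖) :
    (‖g θ1 - g θ2‖ - η) ^ 2 / (2 * β) ≤ h θ1 - h θ2 - ⟪g θ2, θ1 - θ2⟫ := by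
  set u := g θ1 - g θ2 with hu
  set G := ‖u‖ with hGdef
  have hG0 : 0 < G := lt_trans hη hG
  set t : ℝ := (G - η) / (β * G) with ht
  have ht0 : 0 ≤ t := div_nonneg (by linarith) (by positivity)
  set y := θ1 - t • u with hy
  have hA := subgrad hconv hgrad θ2 y
  have hB := descent hβ hgrad happrox θ1 y
  have hyx : y - θ1 = -(t • u) := by rw [hy]; abel
  have hny : ‖y - θ1‖ = t * G := by
    rw [hyx, norm_neg, norm_smul, Real.norm_eq_abs, abs_of_nonneg ht0, hGdef]
  have hinner1 : ⟪g θ1, y - θ1⟫ = -(t * ⟪g θ1, u⟫) := by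
    rw [hyx, inner_neg_right, real_inner_smul_right]
  have hinner2 : ⟪g θ2, y - θ2⟫ = ⟪g θ2, θ1 - θ2⟫ - t * ⟪g θ2, u⟫ := by
    have : y - θ2 = (θ1 - θ2) - t • u := by rw [hy]; abel
    rw [this, inner_sub_right, real_inner_smul_right]
  have huu : ⟪g θ1, u⟫ - ⟪g θ2, u⟫ = G ^ 2 := by
    rw [← inner_sub_left, ← hu, ← real_inner_self_eq_norm_sq]
  have htG : t * G = (G - η) / β := by
    rw [ht]; field_simp
  have hkey : -(t * ⟪g θ1, u⟫) + t * ⟪g θ2, u⟫ + β / 2 * (t * G) ^ 2 + η * (t * G)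
      = -((G - η) ^ 2 / (2 * β)) := by
    have : -(t * ⟪g θ1, u⟫) + t * ⟪g θ2, u⟫ = -(t * G ^ 2) := by
      linear_combination (-t) * huu
    rw [this, htG]
    have htg2 : t * G ^ 2 = (G - η) / β * G := by
      rw [ht]; field_simp
    rw [htg2]
    field_simp
    ring
  rw [hinner1] at hB
  rw [hinner2] at hA
  rw [hny] at hB
  nlinarith [hA, hB, hkey]

end aux

theorem approx_cocoercive
    {E : Type*} [NormedAddCommGroup E] [InnerProductSpace ℝ E] [CompleteSpace E]
    (h : E → ℝ) (g : E → E) (β η : ℝ) (hβ : 0 < β) (hη : 0 < η)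
    (hconv : ConvexOn ℝ Set.univ h)
    (hgrad : ∀ θ : E, HasGradientAt h (g θ) θ)
    (happrox : ∀ θ1 θ2 : E, ‖g θ1 - g θ2‖ ≤ β * ‖θ1 - θ2‖ + η) :
    ∀ θ1 θ2 : E,
      ⟪g θ1 - g θ2, θ1 - θ2⟫ ≥ 1 / β * (max (‖g θ1 - g θ2‖ - η) 0) ^ 2 := by
  intro θ1 θ2
  have hmono : (0:ℝ) ≤ ⟪g θ1 - g θ2, θ1 - θ2⟫ := by
    have h1 := subgrad hconv hgrad θ1 θ2
    have h2 := subgrad hconv hgrad θ2 θ1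
    have e1 : θ2 - θ1 = -(θ1 - θ2) := by abel
    rw [inner_sub_left]
    rw [e1, inner_neg_right] at h1
    linarith
  by_cases hG : ‖g θ1 - g θ2‖ ≤ η
  · rw [max_eq_right (by linarith)]
    simpa using hmono
  · push_neg at hG
    rw [max_eq_left (by linarith)]
    have k1 := key_step hβ hη hconv hgrad happrox θ1 θ2 hG
    have hG' : η < ‖g θ2 - g θ1‖ := by rwa [norm_sub_rev]
    have k2 := key_step hβ hη hconv hgrad happrox θ2 θ1 hG'
    rw [norm_sub_rev] at k2
    have e2 : ⟪g θ1, θ2 - θ1⟫ = -⟪g θ1, θ1 - θ2⟫ := by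
      rw [show θ2 - θ1 = -(θ1 - θ2) by abel, inner_neg_right]
    rw [e2] at k2
    rw [inner_sub_left]
    have hb : (‖g θ1 - g θ2‖ - η) ^ 2 / (2 * β) + (‖g θ1 - g θ2‖ - η) ^ 2 / (2 * β)
        = 1 / β * (‖g θ1 - g θ2‖ - η) ^ 2 := by field_simp; ring
    linarith [k1, k2]
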